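/- Suppose n is odd and A = {a_1,…,a_n} is a subset of F_q (q odd) with η(-δ_A(a_i)) = 1 for all i. Then there exist nonzero v_1,…,v_n with v_i^2 = -δ_A(a_i)^{-1} such that the extended GRS code GRS_{(n+1)/2}(A ∪ {∞}, v) is Euclidean self-dual. In particular, a q-ary MDS self-dual code of length n+1 exists. -/

import Mathlib

open Finset

variable {F : Type*} [Field F]

/-- `δ_A(aᵢ)` for a listed set `a : Fin n → F`. -/
noncomputable def delta {n : ℕ} (a : Fin n → F) (i : Fin n) : F :=
  ∏ j ∈ Finset.univ.erase i, (a i - a j)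

/-- `δ_S(x)` for a finite set `S ⊆ F`. -/
noncomputable def deltaSet [DecidableEq F] (S : Finset F) (x : F) : F :=
  ∏ y ∈ S.erase x, (x - y)

/-- Euclidean dual of a linear code. -/
def dualCode {n : ℕ} (C : Submodule F (Fin n → F)) : Submodule F (Fin n → F) where
  carrier := {x | ∀ y ∈ C, ∑ i, x i * y i = 0}
  add_mem' := by
    intro x y hx hy z hz
    simp [add_mul, Finset.sum_add_distrib, hx z hz, hy z hz]
  zero_mem' := by intro y hy; simp
  smul_mem' := by
    intro c x hx y hy
    simp [smul_eq_mul, mul_assoc, ← Finset.mul_sum, hx y hy]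

/-- Hamming weight. -/
noncomputable def wt {n : ℕ} (c : Fin n → F) : ℕ := Nat.card {i // c i ≠ 0}

/-- `C` is an `[n, k, n-k+1]` MDS code. -/
noncomputable def IsMDSCode {n : ℕ} (C : Submodule F (Fin n → F)) (k : ℕ) : Prop :=
  Module.finrank F C = k ∧ ∀ c ∈ C, c ≠ 0 → n - k + 1 ≤ wt c

noncomputable def GRSmap {n : ℕ} (a v : Fin n → F) : Polynomial F →ₗ[F] (Fin n → F) where
  toFun f := fun i => v i * Polynomial.eval (a i) f
  map_add' f g := by funext i; simp [mul_add]
  map_smul' c f := by funext i; simp [Polynomial.eval_smul]; ring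

/-- Generalized Reed–Solomon code `GRS_k(A, v)`. -/
noncomputable def GRS {n : ℕ} (k : ℕ) (a v : Fin n → F) : Submodule F (Fin n → F) :=
  Submodule.map (GRSmap a v) (Polynomial.degreeLT F k)

noncomputable def GRSextMap {n : ℕ} (k : ℕ) (a v : Fin n → F) :
    Polynomial F →ₗ[F] (Fin (n+1) → F) where
  toFun f := fun i =>
    if h : (i : ℕ) < n then v ⟨i, h⟩ * Polynomial.eval (a ⟨i, h⟩) f else f.coeff (k - 1)
  map_add' f g := by
    funext i
    by_cases h : (i : ℕ) < n <;> simp [h, mul_add]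
  map_smul' c f := by
    funext i
    by_cases h : (i : ℕ) < n <;> simp [h, Polynomial.eval_smul] <;> ring

/-- Extended generalized Reed–Solomon code `GRS_k(A ∪ {∞}, v)`. -/
noncomputable def GRSext {n : ℕ} (k : ℕ) (a v : Fin n → F) : Submodule F (Fin (n+1) → F) :=
  Submodule.map (GRSextMap k a v) (Polynomial.degreeLT F k)

-- helpers appended after the pinned defs
open Polynomial Lagrange in
lemma my_basis_coeff {ι : Type*} [DecidableEq ι] {s : Finset ι} {v : ι → F} {i : ι}
    (hi : i ∈ s) :
    (Lagrange.basis s v i).coeff (#s - 1) = nodalWeight s v i := by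
  rw [basis_eq_prod_sub_inv_mul_nodal_div hi, ← nodal_erase_eq_nodal_div hi, coeff_C_mul]
  have h1 : (nodal (s.erase i) v).natDegree = #s - 1 := by
    rw [natDegree_nodal, card_erase_of_mem hi]
  rw [← h1, (nodal_monic).coeff_natDegree, mul_one]

open Polynomial Lagrange in
lemma my_coeff_eq_sum {ι : Type*} [DecidableEq ι] {s : Finset ι} {v : ι → F}
    (hvs : Set.InjOn v s) {f : F[X]} (hf : f.degree < #s) :
    f.coeff (#s - 1) = ∑ i ∈ s, nodalWeight s v i * f.eval (v i) := by
  conv_lhs => rw [eq_interpolate hvs hf]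
  rw [interpolate_apply, finset_sum_coeff]
  refine Finset.sum_congr rfl fun i hi => ?_
  rw [coeff_C_mul, my_basis_coeff hi, mul_comm]

noncomputable def dotForm (N : ℕ) : LinearMap.BilinForm F (Fin N → F) :=
  LinearMap.mk₂ F (fun x y => ∑ i, x i * y i)
    (fun x y z => by simp [add_mul, Finset.sum_add_distrib])
    (fun c x y => by simp [Finset.mul_sum, mul_assoc])
    (fun x y z => by simp [mul_add, Finset.sum_add_distrib])
    (fun c x y => by simp [Finset.mul_sum]; ring_nf; simp [mul_assoc, mul_comm, mul_left_comm])

lemma dotForm_apply {N : ℕ} (x y : Fin N → F) : dotForm N x y = ∑ i, x i * y i := rfl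

lemma dotForm_nondeg (N : ℕ) : (dotForm (F := F) N).Nondegenerate := by
  constructor
  all_goals
    intro m hm
    funext i
    have := hm (Pi.single i 1)
    simpa [dotForm_apply, Pi.single_apply, mul_comm] using this

lemma dotForm_refl (N : ℕ) : (dotForm (F := F) N).IsRefl := by
  intro x y h
  simpa [dotForm_apply, mul_comm] using h

lemma dualCode_eq_orthogonal {N : ℕ} (C : Submodule F (Fin N → F)) :
    dualCode C = (dotForm N).orthogonal C := by
  ext x
  constructor
  · intro hx y hy
    have := hx y hy
    simpa [LinearMap.BilinForm.IsOrtho, dotForm_apply, mul_comm] using this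
  · intro hx y hy
    have := hx y hy
    simpa [LinearMap.BilinForm.IsOrtho, dotForm_apply, mul_comm] using this

lemma finrank_degreeLT (k : ℕ) : Module.finrank F (Polynomial.degreeLT F k) = k := by
  rw [(Polynomial.degreeLTEquiv F k).finrank_eq, Module.finrank_fin_fun]

lemma finrank_map_degreeLT {N k : ℕ} (g : Polynomial F →ₗ[F] (Fin N → F))
    (hinj : ∀ f ∈ Polynomial.degreeLT F k, g f = 0 → f = 0) :
    Module.finrank F (Submodule.map g (Polynomial.degreeLT F k)) = k := by
  rw [← LinearMap.range_domRestrict]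
  rw [LinearMap.finrank_range_of_inj, finrank_degreeLT]
  rw [← LinearMap.ker_eq_bot]
  ext ⟨f, hf⟩
  simp only [LinearMap.mem_ker, Submodule.mem_bot, Submodule.mk_eq_zero]
  constructor
  · intro h; exact hinj f hf h
  · rintro rfl; simp

lemma finrank_dualCode {N : ℕ} (C : Submodule F (Fin N → F)) :
    Module.finrank F (dualCode C) = N - Module.finrank F C := by
  rw [dualCode_eq_orthogonal,
    LinearMap.BilinForm.finrank_orthogonal (dotForm_nondeg N),
    Module.finrank_fin_fun]

lemma GRSextMap_apply_lt {n k : ℕ} (a v : Fin n → F) (f : Polynomial F) (i : Fin (n+1))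
    (h : (i : ℕ) < n) : GRSextMap k a v f i = v ⟨i, h⟩ * f.eval (a ⟨i, h⟩) := by
  simp [GRSextMap, h]

lemma GRSextMap_apply_castSucc {n k : ℕ} (a v : Fin n → F) (f : Polynomial F) (i : Fin n) :
    GRSextMap k a v f (Fin.castSucc i) = v i * f.eval (a i) := by
  simp [GRSextMap, i.isLt]

lemma GRSextMap_apply_last {n k : ℕ} (a v : Fin n → F) (f : Polynomial F) :
    GRSextMap k a v f (Fin.last n) = f.coeff (k - 1) := by
  simp [GRSextMap]

lemma coeff_mul_of_degreeLT {m : ℕ} {f g : Polynomial F}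
    (hf : f ∈ Polynomial.degreeLT F (m+1)) (hg : g ∈ Polynomial.degreeLT F (m+1)) :
    (f * g).coeff (m + m) = f.coeff m * g.coeff m := by
  rw [Polynomial.coeff_mul, Finset.sum_eq_single (m, m)]
  · intro b hb hne
    rw [Finset.HasAntidiagonal.mem_antidiagonal] at hb
    by_cases h1 : m < b.1
    · have : f.coeff b.1 = 0 := Polynomial.coeff_eq_zero_of_degree_lt
        (lt_of_lt_of_le (Polynomial.mem_degreeLT.mp hf) (by exact_mod_cast h1))
      simp [this]
    · have h2 : m < b.2 := by
        have hne' : ¬(b.1 = m ∧ b.2 = m) := fun ⟨h, h'⟩ => hne (Prod.ext h h')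
        omega
      have : g.coeff b.2 = 0 := Polynomial.coeff_eq_zero_of_degree_lt
        (lt_of_lt_of_le (Polynomial.mem_degreeLT.mp hg) (by exact_mod_cast h2))
      simp [this]
  · intro h
    simp [Finset.mem_antidiagonal] at h

lemma degree_mul_lt_of_degreeLT {m : ℕ} {f g : Polynomial F}
    (hf : f ∈ Polynomial.degreeLT F (m+1)) (hg : g ∈ Polynomial.degreeLT F (m+1)) :
    (f * g).degree < ((2*m+1 : ℕ) : WithBot ℕ) := by
  rcases eq_or_ne f 0 with rfl | hf0
  · simp only [zero_mul, Polynomial.degree_zero]; exact WithBot.bot_lt_coe _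
  rcases eq_or_ne g 0 with rfl | hg0
  · simp only [mul_zero, Polynomial.degree_zero]; exact WithBot.bot_lt_coe _
  have h1 : f.natDegree < m + 1 :=
    (Polynomial.natDegree_lt_iff_degree_lt hf0).mpr (Polynomial.mem_degreeLT.mp hf)
  have h2 : g.natDegree < m + 1 :=
    (Polynomial.natDegree_lt_iff_degree_lt hg0).mpr (Polynomial.mem_degreeLT.mp hg)
  rw [Polynomial.degree_mul, Polynomial.degree_eq_natDegree hf0,
    Polynomial.degree_eq_natDegree hg0]
  exact_mod_cast by omega
/-- Lemma 3: if `n` is odd and `η(-δ_A(aᵢ)) = 1` for all `i`, there is a vector `v` with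
`vᵢ² = -δ_A(aᵢ)⁻¹` making the extended code `GRS_{(n+1)/2}(A ∪ ∞, v)` Euclidean self-dual;
in particular a `q`-ary MDS self-dual code of length `n + 1` exists. -/
theorem stmt3 {F : Type*} [Field F] [Fintype F] (hodd : Odd (Fintype.card F))
    {n : ℕ} (hn : Odd n) (a : Fin n ↪ F)
    (hη : ∀ i, IsSquare (-(delta ⇑a i))) :
    ∃ v : Fin n → F, (∀ i, v i ≠ 0) ∧
      (∀ i, v i ^ 2 = -(delta ⇑a i)⁻¹) ∧
      GRSext ((n + 1) / 2) ⇑a v = dualCode (GRSext ((n + 1) / 2) ⇑a v) ∧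
      IsMDSCode (GRSext ((n + 1) / 2) ⇑a v) ((n + 1) / 2) := by
  classical
  obtain ⟨m, rfl⟩ := hn
  simp only [show (2*m+1+1)/2 = m+1 from by omega]
  have hδ : ∀ i, delta (⇑a) i ≠ 0 := by
    intro i
    refine Finset.prod_ne_zero_iff.mpr fun j hj => sub_ne_zero_of_ne fun h => ?_
    exact (Finset.mem_erase.mp hj).1 (a.injective h).symm
  choose s hs using hη
  have hs0 : ∀ i, s i ≠ 0 := by
    intro i h
    apply hδ i
    have := hs i
    rw [h, mul_zero, neg_eq_zero] at this
    exact this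
  set v : Fin (2*m+1) → F := fun i => s i * (delta ⇑a i)⁻¹ with hvdef
  have hv0 : ∀ i, v i ≠ 0 := fun i => mul_ne_zero (hs0 i) (inv_ne_zero (hδ i))
  have hsq : ∀ i, v i ^ 2 = -(delta ⇑a i)⁻¹ := by
    intro i
    have h1 : v i ^ 2 = (s i * s i) * ((delta ⇑a i)⁻¹ * (delta ⇑a i)⁻¹) := by
      rw [hvdef]; ring
    rw [h1, ← hs i, neg_mul, ← mul_assoc, mul_inv_cancel₀ (hδ i), one_mul]
  have hW : ∀ i, Lagrange.nodalWeight Finset.univ ⇑a i = (delta ⇑a i)⁻¹ := by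
    intro i
    rw [Lagrange.nodalWeight, delta, ← Finset.prod_inv_distrib]
  -- key orthogonality
  have key : ∀ f ∈ Polynomial.degreeLT F (m+1), ∀ g ∈ Polynomial.degreeLT F (m+1),
      ∑ i, GRSextMap (m+1) ⇑a v f i * GRSextMap (m+1) ⇑a v g i = 0 := by
    intro f hf g hg
    rw [Fin.sum_univ_castSucc]
    simp only [GRSextMap_apply_castSucc, GRSextMap_apply_last, Nat.add_sub_cancel]
    have hcoef : (f*g).coeff (#(Finset.univ : Finset (Fin (2*m+1))) - 1)
        = ∑ i, Lagrange.nodalWeight Finset.univ ⇑a i * (f*g).eval (⇑a i) :=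
      my_coeff_eq_sum a.injective.injOn
        (by rw [Finset.card_univ, Fintype.card_fin]; exact degree_mul_lt_of_degreeLT hf hg)
    rw [Finset.card_univ, Fintype.card_fin,
      show 2*m+1-1 = m + m from by omega, coeff_mul_of_degreeLT hf hg] at hcoef
    have hterm : ∀ i : Fin (2*m+1), v i * Polynomial.eval (⇑a i) f * (v i * Polynomial.eval (⇑a i) g)
        = -(Lagrange.nodalWeight Finset.univ ⇑a i * (f*g).eval (⇑a i)) := by
      intro i
      have h1 : v i * Polynomial.eval (⇑a i) f * (v i * Polynomial.eval (⇑a i) g)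
          = v i ^ 2 * (f*g).eval (⇑a i) := by rw [Polynomial.eval_mul]; ring
      rw [h1, hsq i, hW i, neg_mul]
    rw [Finset.sum_congr rfl (fun i _ => hterm i), Finset.sum_neg_distrib, ← hcoef]
    exact neg_add_cancel _
  have hle : GRSext (m+1) ⇑a v ≤ dualCode (GRSext (m+1) ⇑a v) := by
    intro x hx
    obtain ⟨f, hf, rfl⟩ := hx
    intro y hy
    obtain ⟨g, hg, rfl⟩ := hy
    exact key f hf g hg
  have hinj : ∀ f ∈ Polynomial.degreeLT F (m+1), GRSextMap (m+1) ⇑a v f = 0 → f = 0 := by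
    intro f hf h0
    refine Polynomial.eq_zero_of_degree_lt_of_eval_index_eq_zero
      (Finset.univ : Finset (Fin (2*m+1))) a.injective.injOn ?_ ?_
    · rw [Finset.card_univ, Fintype.card_fin]
      exact lt_of_lt_of_le (Polynomial.mem_degreeLT.mp hf)
        (by exact_mod_cast Nat.le_of_lt_succ (by omega))
    · intro i _
      have h := congrFun h0 (Fin.castSucc i)
      rw [GRSextMap_apply_castSucc] at h
      simp only [Pi.zero_apply] at h
      exact (mul_eq_zero.mp h).resolve_left (hv0 i)
  have hrank : Module.finrank F (GRSext (m+1) ⇑a v) = m+1 :=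
    finrank_map_degreeLT _ hinj
  have hdrank : Module.finrank F (dualCode (GRSext (m+1) ⇑a v)) = m+1 := by
    rw [finrank_dualCode, hrank]
    omega
  have heq : GRSext (m+1) ⇑a v = dualCode (GRSext (m+1) ⇑a v) :=
    Submodule.eq_of_le_of_finrank_le hle (by rw [hdrank, hrank])
  refine ⟨v, hv0, hsq, heq, hrank, ?_⟩
  -- MDS distance
  intro c hc hc0
  obtain ⟨f, hf, rfl⟩ := hc
  have hf0 : f ≠ 0 := fun h => hc0 (by rw [h, map_zero])
  have hndeg : f.natDegree < m+1 :=
    (Polynomial.natDegree_lt_iff_degree_lt hf0).mpr (Polynomial.mem_degreeLT.mp hf)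
  set c := GRSextMap (m+1) ⇑a v f with hcdef
  have hwt : wt c = #(Finset.univ.filter fun i => c i ≠ 0) := by
    rw [wt, Nat.card_eq_fintype_card, Fintype.card_subtype]
  set Z : Finset (Fin (2*m+1+1)) := Finset.univ.filter (fun i => c i = 0) with hZdef
  have hsplit : #Z + #(Finset.univ.filter fun i => c i ≠ 0) = 2*m+2 := by
    rw [hZdef, Finset.card_filter_add_card_filter_not]
    simp
  set R : Finset F := f.roots.toFinset with hRdef
  have hR : #R ≤ f.natDegree := le_trans (Multiset.toFinset_card_le _) (Polynomial.card_roots' f)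
  have hcount : ∀ T : Finset (Fin (2*m+1+1)), T ⊆ Z → (∀ i ∈ T, (i : ℕ) < 2*m+1) →
      #T ≤ #R := by
    intro T hTZ hTlt
    refine Finset.card_le_card_of_injOn
      (fun i => if h : (i : ℕ) < 2*m+1 then a ⟨i, h⟩ else 0) ?_ ?_
    · intro i hi
      have h := hTlt i hi
      simp only [dif_pos h]
      rw [hRdef, Finset.mem_coe, Multiset.mem_toFinset, Polynomial.mem_roots hf0]
      have hz : c i = 0 := by
        have := hTZ hi
        rw [hZdef, Finset.mem_filter] at this
        exact this.2
      rw [hcdef, GRSextMap_apply_lt ⇑a v f i h] at hz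
      exact (mul_eq_zero.mp hz).resolve_left (hv0 _)
    · intro i hi j hj hij
      have hi' := hTlt i hi
      have hj' := hTlt j hj
      simp only [dif_pos hi', dif_pos hj'] at hij
      have h2 := a.injective hij
      rw [Fin.mk.injEq] at h2
      exact Fin.ext h2
  have hZcard : #Z ≤ m := by
    by_cases hcm : f.coeff m = 0
    · -- low degree case
      have hnd2 : f.natDegree < m := by
        rcases Nat.lt_or_ge f.natDegree m with h | h
        · exact h
        · exfalso
          have : f.natDegree = m := by omega
          have hl := Polynomial.leadingCoeff_ne_zero.mpr hf0
          rw [Polynomial.leadingCoeff, this, hcm] at hl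
          exact hl rfl
      have h1 : #Z ≤ #(Z.erase (Fin.last (2*m+1))) + 1 := by
        by_cases hmem : Fin.last (2*m+1) ∈ Z
        · rw [Finset.card_erase_of_mem hmem]
          have : 1 ≤ #Z := Finset.card_pos.mpr ⟨_, hmem⟩
          omega
        · rw [Finset.erase_eq_of_notMem hmem]
          omega
      have h2 : #(Z.erase (Fin.last (2*m+1))) ≤ #R := by
        apply hcount _ (Finset.erase_subset _ _)
        intro i hi
        have : i ≠ Fin.last (2*m+1) := (Finset.mem_erase.mp hi).1
        exact Fin.val_lt_last this
      omega
    · -- top coefficient nonzero: last coordinate nonzero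
      have hall : ∀ i ∈ Z, (i : ℕ) < 2*m+1 := by
        intro i hi
        rcases Nat.lt_or_ge (i : ℕ) (2*m+1) with h | h
        · exact h
        · exfalso
          have hilast : i = Fin.last (2*m+1) := by
            apply Fin.ext
            have := i.isLt
            simp only [Fin.val_last]
            omega
          have hz : c i = 0 := by
            rw [hZdef, Finset.mem_filter] at hi
            exact hi.2
          rw [hilast, hcdef, GRSextMap_apply_last, Nat.add_sub_cancel] at hz
          exact hcm hz
      have := hcount Z le_rfl hall
      omega
  omega
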